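/- Let M be a module with finite Krull-Schmidt length, and let N be a direct summand of M. If all direct sum decompositions of M into indecomposable summands have the same cardinality, then all direct sum decompositions of N into indecomposable summands have the same cardinality. -/

import Mathlib

/-- `N` is a direct summand of the module `M`. -/
def IsSummand {R : Type*} [Ring R] {M : Type*} [AddCommGroup M] [Module R M]
    (N : Submodule R M) : Prop :=
  ∃ N', IsCompl N N'

/-- `s` is a direct sum decomposition of the submodule `N` into nonzero summands. -/
def IsDecompOf {R : Type*} [Ring R] {M : Type*} [AddCommGroup M] [Module R M]
    (N : Submodule R M) (s : Set (Submodule R M)) : Prop :=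
  sSupIndep s ∧ sSup s = N ∧ ⊥ ∉ s

/-- `N` is an indecomposable submodule. -/
def IsIndecomp {R : Type*} [Ring R] {M : Type*} [AddCommGroup M] [Module R M]
    (N : Submodule R M) : Prop :=
  N ≠ ⊥ ∧ ∀ A B : Submodule R M, A ⊔ B = N → A ⊓ B = ⊥ → A = ⊥ ∨ B = ⊥

/-- `s` is a finite direct sum decomposition of `N` into indecomposable submodules. -/
def IsIndecompDecompOf {R : Type*} [Ring R] {M : Type*} [AddCommGroup M] [Module R M]
    (N : Submodule R M) (s : Set (Submodule R M)) : Prop :=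
  IsDecompOf N s ∧ s.Finite ∧ ∀ A ∈ s, IsIndecomp A

section Aux

variable {R : Type*} [Ring R] {M : Type*} [AddCommGroup M] [Module R M]

lemma singleton_decomp (N : Submodule R M) : IsDecompOf N ({N} \ {⊥}) := by
  by_cases h : N = ⊥
  · subst h
    have : ({(⊥ : Submodule R M)} \ {⊥} : Set (Submodule R M)) = ∅ := by simp
    rw [this]
    exact ⟨sSupIndep_empty, by simp, by simp⟩
  · have : ({N} \ {⊥} : Set (Submodule R M)) = {N} := by
      apply Set.diff_singleton_eq_self
      simpa using Ne.symm h
    rw [this]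
    exact ⟨sSupIndep_singleton N, by simp, by simp [Ne.symm h]⟩

lemma disjoint_aux {N N' : Submodule R M} {s u : Set (Submodule R M)}
    (hs : IsDecompOf N s) (hu : IsDecompOf N' u) (h : Disjoint N N')
    {a : Submodule R M} (ha : a ∈ s) : Disjoint a (sSup ((s ∪ u) \ {a})) := by
  have h1 : sSup ((s ∪ u) \ {a}) ≤ sSup (s \ {a}) ⊔ N' := by
    rw [← hu.2.1, ← sSup_union]
    refine sSup_le_sSup ?_
    rintro x ⟨hx1 | hx1, hx2⟩
    · exact Or.inl ⟨hx1, hx2⟩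
    · exact Or.inr hx1
  refine Disjoint.mono_right h1 ?_
  have d1 := hs.1 ha
  have d2 : Disjoint (a ⊔ sSup (s \ {a})) N' := by
    refine h.mono_left ?_
    rw [← hs.2.1]
    exact sup_le (le_sSup ha) (sSup_le_sSup Set.diff_subset)
  exact d1.disjoint_sup_right_of_disjoint_sup_left d2

lemma union_decomp {N N' : Submodule R M} {s u : Set (Submodule R M)}
    (hs : IsDecompOf N s) (hu : IsDecompOf N' u) (h : Disjoint N N') :
    IsDecompOf (N ⊔ N') (s ∪ u) := by
  refine ⟨?_, ?_, ?_⟩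
  · intro a ha
    rcases ha with ha | ha
    · exact disjoint_aux hs hu h ha
    · have := disjoint_aux hu hs h.symm ha
      rwa [Set.union_comm] at this
  · rw [sSup_union, hs.2.1, hu.2.1]
  · rintro (h' | h')
    · exact hs.2.2 h'
    · exact hu.2.2 h'

lemma replace_decomp {N' : Submodule R M} {u : Set (Submodule R M)} (hu : IsDecompOf N' u)
    (hfin : u.Finite) {A B C : Submodule R M} (hA : A ∈ u) (hBC : B ⊔ C = A)
    (hd : B ⊓ C = ⊥) (hB : B ≠ ⊥) (hC : C ≠ ⊥) :
    ∃ u', IsDecompOf N' u' ∧ u'.ncard = u.ncard + 1 := by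
  have hBA : B ≤ A := hBC ▸ le_sup_left
  have hCA : C ≤ A := hBC ▸ le_sup_right
  have hBC' : Disjoint B C := disjoint_iff.mpr hd
  have hBneC : B ≠ C := by
    intro h; subst h; exact hB (by simpa using hd)
  have hmemA : ∀ x, x ∈ u → x ≠ A → A ∈ u \ {x} := by
    intro x hx hxA
    exact ⟨hA, fun h => hxA (Set.mem_singleton_iff.mp h).symm⟩
  have hBu : B ∉ u \ {A} := by
    rintro ⟨h1, h2⟩
    have h2' : B ≠ A := h2
    have hle : B ≤ sSup (u \ {B}) := hBA.trans (le_sSup (hmemA B h1 h2'))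
    exact hB ((hu.1 h1).eq_bot_of_le hle)
  have hCu : C ∉ u \ {A} := by
    rintro ⟨h1, h2⟩
    have h2' : C ≠ A := h2
    have hle : C ≤ sSup (u \ {C}) := hCA.trans (le_sSup (hmemA C h1 h2'))
    exact hC ((hu.1 h1).eq_bot_of_le hle)
  set u' : Set (Submodule R M) := insert B (insert C (u \ {A})) with hu'def
  have hindep : sSupIndep u' := by
    intro a ha
    rcases ha with rfl | rfl | ha
    · have hdisj : Disjoint a (C ⊔ sSup (u \ {A})) := by
        refine hBC'.disjoint_sup_right_of_disjoint_sup_left ?_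
        rw [hBC]; exact hu.1 hA
      refine hdisj.mono_right (sSup_le ?_)
      rintro y ⟨hy1, hy2⟩
      have hy2' : y ≠ a := hy2
      rcases hy1 with rfl | rfl | hy3
      · exact absurd rfl hy2'
      · exact le_sup_left
      · exact (le_sSup hy3).trans le_sup_right
    · have hdisj : Disjoint a (B ⊔ sSup (u \ {A})) := by
        refine hBC'.symm.disjoint_sup_right_of_disjoint_sup_left ?_
        rw [sup_comm, hBC]; exact hu.1 hA
      refine hdisj.mono_right (sSup_le ?_)
      rintro y ⟨hy1, hy2⟩
      have hy2' : y ≠ a := hy2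
      rcases hy1 with rfl | rfl | hy3
      · exact le_sup_left
      · exact absurd rfl hy2'
      · exact (le_sSup hy3).trans le_sup_right
    · have haA : a ≠ A := ha.2
      have hAa : A ∈ u \ {a} := hmemA a ha.1 haA
      refine (hu.1 ha.1).mono_right (sSup_le ?_)
      rintro y ⟨hy1, hy2⟩
      rcases hy1 with rfl | rfl | hy3
      · exact hBA.trans (le_sSup hAa)
      · exact hCA.trans (le_sSup hAa)
      · exact le_sSup ⟨hy3.1, fun h => hy2 h⟩
  have hsup : sSup u' = N' := by
    rw [hu'def, sSup_insert, sSup_insert, ← sup_assoc, hBC, ← sSup_insert,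
      Set.insert_diff_singleton, Set.insert_eq_self.mpr hA, hu.2.1]
  have hbot : ⊥ ∉ u' := by
    rintro (h' | h' | h')
    · exact hB h'.symm
    · exact hC h'.symm
    · exact hu.2.2 h'.1
  refine ⟨u', ⟨hindep, hsup, hbot⟩, ?_⟩
  have h1 : (u \ {A}).Finite := (hfin.diff)
  have hBni : B ∉ insert C (u \ {A}) := by
    rintro (h | h)
    · exact hBneC h
    · exact hBu h
  rw [hu'def, Set.ncard_insert_of_notMem hBni (h1.insert C),
    Set.ncard_insert_of_notMem hCu h1,
    Set.ncard_diff_singleton_of_mem hA]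
  have : 0 < u.ncard := (Set.ncard_pos hfin).mpr ⟨A, hA⟩
  omega

end Aux
lemma exists_indecomp_decomp {R : Type*} [Ring R] {M : Type*} [AddCommGroup M] [Module R M]
    (hKS : ∃ n : ℕ, ∀ s : Set (Submodule R M), IsDecompOf ⊤ s → s.Finite ∧ s.ncard ≤ n)
    {N : Submodule R M} (hN : IsSummand N) : ∃ u, IsIndecompDecompOf N u := by
  obtain ⟨n, hn⟩ := hKS
  obtain ⟨N', hc⟩ := hN
  have key : ∀ u : Set (Submodule R M), IsDecompOf N u → u.Finite ∧ u.ncard ≤ n := by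
    intro u hu
    have hd := union_decomp hu (singleton_decomp N') hc.disjoint
    rw [hc.sup_eq_top] at hd
    obtain ⟨hfin, hcard⟩ := hn _ hd
    have h1 : u.Finite := hfin.subset Set.subset_union_left
    exact ⟨h1, le_trans (Set.ncard_le_ncard Set.subset_union_left hfin) hcard⟩
  set P : Set ℕ := {k | ∃ u : Set (Submodule R M), IsDecompOf N u ∧ u.ncard = k} with hP
  have hPne : P.Nonempty := ⟨_, _, singleton_decomp N, rfl⟩
  have hPbdd : BddAbove P := ⟨n, by rintro k ⟨u, hu, rfl⟩; exact (key u hu).2⟩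
  obtain ⟨u, hu, hk⟩ := Nat.sSup_mem hPne hPbdd
  refine ⟨u, hu, (key u hu).1, ?_⟩
  intro A hA
  refine ⟨fun h => hu.2.2 (h ▸ hA), ?_⟩
  intro B C hBC hd
  by_contra hcon
  push_neg at hcon
  obtain ⟨u', hu', hcard⟩ := replace_decomp hu (key u hu).1 hA hBC hd hcon.1 hcon.2
  have hmem : u'.ncard ∈ P := ⟨u', hu', rfl⟩
  have := le_csSup hPbdd hmem
  omega

/-- Let `M` have finite Krull-Schmidt length and let `N` be a direct summand of `M`. If all
indecomposable direct sum decompositions of `M` have the same cardinality, then all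
indecomposable direct sum decompositions of `N` have the same cardinality. -/
theorem indecomp_decomp_card_eq_of_summand {R : Type*} [Ring R] {M : Type*}
    [AddCommGroup M] [Module R M]
    (hKS : ∃ n : ℕ, ∀ s : Set (Submodule R M), IsDecompOf ⊤ s → s.Finite ∧ s.ncard ≤ n)
    (hM : ∀ s t : Set (Submodule R M), IsIndecompDecompOf (⊤ : Submodule R M) s →
      IsIndecompDecompOf (⊤ : Submodule R M) t → s.ncard = t.ncard)
    (N : Submodule R M) (hN : IsSummand N) :
    ∀ s t : Set (Submodule R M), IsIndecompDecompOf N s → IsIndecompDecompOf N t →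
      s.ncard = t.ncard := by
  intro s t hs ht
  obtain ⟨N', hc⟩ := hN
  obtain ⟨u, hu⟩ := exists_indecomp_decomp hKS (⟨N, hc.symm⟩ : IsSummand N')
  have mk : ∀ v : Set (Submodule R M), IsIndecompDecompOf N v →
      IsIndecompDecompOf ⊤ (v ∪ u) := by
    intro v hv
    have hd := union_decomp hv.1 hu.1 hc.disjoint
    rw [hc.sup_eq_top] at hd
    refine ⟨hd, hv.2.1.union hu.2.1, ?_⟩
    rintro A (h | h)
    · exact hv.2.2 A h
    · exact hu.2.2 A h
  have h1 := hM _ _ (mk s hs) (mk t ht)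
  have hdisj : ∀ v : Set (Submodule R M), IsDecompOf N v → Disjoint v u := by
    intro v hv
    rw [Set.disjoint_left]
    intro x hxv hxu
    have hx1 : x ≤ N := hv.2.1 ▸ le_sSup hxv
    have hx2 : x ≤ N' := hu.1.2.1 ▸ le_sSup hxu
    have hx : x = ⊥ := le_bot_iff.mp (hc.disjoint.le_bot.trans' (le_inf hx1 hx2))
    exact hv.2.2 (hx ▸ hxv)
  rw [Set.ncard_union_eq (hdisj s hs.1) hs.2.1 hu.2.1,
    Set.ncard_union_eq (hdisj t ht.1) ht.2.1 hu.2.1] at h1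
  omega
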